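/- arXiv:2504.21429 — 6 statements merged into one kernel-verified Lean document; each statement's English description precedes it below -/
import Mathlib

section
/- The language recognized by a quasi-ordered automaton over a finite preordered alphabet Σ is upwards-closed in the subword ordering on Σ*. -/
/-- Extension of a transition function `δ : Σ × Q → Q` to words:
`δ*(ε,q) = q` and `δ*(wσ,q) = δ(σ, δ*(w,q))`. -/
def deltaStar {σ Q : Type*} (δ : σ → Q → Q) (w : List σ) (q : Q) : Q :=
  w.foldl (fun p a => δ a p) q

private lemma deltaStar_le_self {σ Q : Type*} [Preorder σ] [Preorder Q]
    (δ : σ → Q → Q)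
    (hincr : ∀ (a : σ) (q : Q), q ≤ δ a q) :
    ∀ (w : List σ) (q : Q), q ≤ deltaStar δ w q := by
  intro w
  induction w with
  | nil => intro q; exact le_refl q
  | cons a t ih =>
    intro q
    exact le_trans (hincr a q) (ih (δ a q))

private lemma deltaStar_mono {σ Q : Type*} [Preorder σ] [Preorder Q]
    (δ : σ → Q → Q)
    (hmono : ∀ (a a' : σ) (q q' : Q), a ≤ a' → q ≤ q' → δ a q ≤ δ a' q')
    (hincr : ∀ (a : σ) (q : Q), q ≤ δ a q)
    {w w' : List σ} (h : List.SublistForall₂ (· ≤ ·) w w') :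
    ∀ {q q' : Q}, q ≤ q' → deltaStar δ w q ≤ deltaStar δ w' q' := by
  induction h with
  | nil =>
    intro q q' hq
    exact le_trans hq (deltaStar_le_self δ hincr _ q')
  | cons hab _ ih =>
    intro q q' hq
    exact ih (hmono _ _ _ _ hab hq)
  | cons_right _ ih =>
    intro q q' hq
    exact ih (le_trans hq (hincr _ q'))

/-- The language recognized by a quasi-ordered automaton over a finite
preordered alphabet is upwards-closed in the subword ordering. -/
theorem qo_automaton_language_upwardClosed {σ Q : Type*}
    [Preorder σ] [Fintype σ] [Preorder Q]
    (q0 : Q) (δ : σ → Q → Q) (F : Set Q)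
    (hmono : ∀ (a a' : σ) (q q' : Q), a ≤ a' → q ≤ q' → δ a q ≤ δ a' q')
    (hincr : ∀ (a : σ) (q : Q), q ≤ δ a q)
    (hF : IsUpperSet F)
    (w w' : List σ)
    (hw : deltaStar δ w q0 ∈ F)
    (hww' : List.SublistForall₂ (· ≤ ·) w w') :
    deltaStar δ w' q0 ∈ F := by
  exact hF (deltaStar_mono δ hmono hincr hww' (le_refl q0)) hw
end

section
/- Let A = (Q,q0,δ,F) be a reachable DFA over a preordered alphabet Σ, and let ⊑ be its canonical quasi-order on states. Then the language recognized by A is upwards-closed for the subword ordering if and only if both: (i) for all q ∈ Q and all letters σ ≼ σ', δ(σ,q) ⊑ δ(σ',q); and (ii) for all q ∈ Q and all σ ∈ Σ, q ⊑ δ(σ,q). Moreover, when these conditions hold, A equipped with ⊑ is a quasi-ordered automaton, i.e. δ is monotone in both arguments and F is upwards-closed for ⊑. -/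
/-- The canonical quasi-order on the states of a DFA:
`q ⊑ q'` iff for every word `w`, `δ*(w,q) ∈ F` implies `δ*(w,q') ∈ F`. -/
def canQO {σ Q : Type*} (δ : σ → Q → Q) (F : Set Q) (q q' : Q) : Prop :=
  ∀ w : List σ, deltaStar δ w q ∈ F → deltaStar δ w q' ∈ F

section Aux

variable {σ Q : Type*} [Preorder σ] (δ : σ → Q → Q) (F : Set Q)

lemma deltaStar_append (u v : List σ) (q : Q) :
    deltaStar δ (u ++ v) q = deltaStar δ v (deltaStar δ u q) :=
  List.foldl_append

lemma deltaStar_cons (a : σ) (w : List σ) (q : Q) :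
    deltaStar δ (a :: w) q = deltaStar δ w (δ a q) := rfl

lemma canQO_trans {q q' q'' : Q} (h : canQO δ F q q') (h' : canQO δ F q' q'') :
    canQO δ F q q'' := fun w hw => h' w (h w hw)

lemma canQO_lift {q q' : Q} (h : canQO δ F q q') (w : List σ) :
    canQO δ F (deltaStar δ w q) (deltaStar δ w q') := by
  intro v hv
  rw [← deltaStar_append] at hv ⊢
  exact h (w ++ v) hv

lemma canQO_deltaStar (h2 : ∀ (q : Q) (a : σ), canQO δ F q (δ a q)) :
    ∀ (l : List σ) (q : Q), canQO δ F q (deltaStar δ l q) := by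
  intro l
  induction l with
  | nil => exact fun q w hw => hw
  | cons a l ih =>
    intro q
    exact canQO_trans δ F (h2 q a) (ih (δ a q))

lemma sublistForall₂_refl (l : List σ) : List.SublistForall₂ (· ≤ ·) l l := by
  induction l with
  | nil => exact List.SublistForall₂.nil
  | cons a l ih => exact List.SublistForall₂.cons le_rfl ih

lemma sublistForall₂_append_left {w w' : List σ}
    (h : List.SublistForall₂ (· ≤ ·) w w') (u : List σ) :
    List.SublistForall₂ (· ≤ ·) (u ++ w) (u ++ w') := by
  induction u with
  | nil => exact h
  | cons a u ih => exact List.SublistForall₂.cons le_rfl ih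

lemma main_lemma (h1 : ∀ (q : Q) (a a' : σ), a ≤ a' → canQO δ F (δ a q) (δ a' q))
    (h2 : ∀ (q : Q) (a : σ), canQO δ F q (δ a q)) :
    ∀ {w w' : List σ}, List.SublistForall₂ (· ≤ ·) w w' →
      ∀ q : Q, canQO δ F (deltaStar δ w q) (deltaStar δ w' q) := by
  intro w w' h
  induction h with
  | nil => exact fun q => canQO_deltaStar δ F h2 _ q
  | @cons a a' l l' hab _ ih =>
    intro q
    rw [deltaStar_cons, deltaStar_cons]
    exact canQO_trans δ F (canQO_lift δ F (h1 q a a' hab) l) (ih (δ a' q))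
  | @cons_right a l l' _ ih =>
    intro q
    rw [deltaStar_cons]
    exact canQO_trans δ F (canQO_lift δ F (h2 q a) l) (ih (δ a q))

end Aux

/-- For a reachable DFA, the recognized language is upwards-closed for the
subword ordering iff (i) `δ(σ,q) ⊑ δ(σ',q)` whenever `σ ≼ σ'` and (ii)
`q ⊑ δ(σ,q)` always; moreover, in that case the DFA equipped with the canonical
quasi-order is a quasi-ordered automaton. -/
theorem upwardClosed_iff_qo_automaton {σ Q : Type*} [Preorder σ]
    (q0 : Q) (δ : σ → Q → Q) (F : Set Q)
    (hreach : ∀ q : Q, ∃ u : List σ, deltaStar δ u q0 = q) :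
    ((∀ w w' : List σ, deltaStar δ w q0 ∈ F →
        List.SublistForall₂ (· ≤ ·) w w' → deltaStar δ w' q0 ∈ F)
      ↔ ((∀ (q : Q) (a a' : σ), a ≤ a' → canQO δ F (δ a q) (δ a' q)) ∧
         (∀ (q : Q) (a : σ), canQO δ F q (δ a q)))) ∧
    (((∀ (q : Q) (a a' : σ), a ≤ a' → canQO δ F (δ a q) (δ a' q)) ∧
      (∀ (q : Q) (a : σ), canQO δ F q (δ a q))) →
      ((∀ (a a' : σ) (q q' : Q), a ≤ a' → canQO δ F q q' →
          canQO δ F (δ a q) (δ a' q')) ∧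
       (∀ q q' : Q, q ∈ F → canQO δ F q q' → q' ∈ F))) := by
  constructor
  · constructor
    · intro hup
      constructor
      · intro q a a' haa w hw
        obtain ⟨u, hu⟩ := hreach q
        have h1 : deltaStar δ (u ++ a :: w) q0 ∈ F := by
          rw [deltaStar_append, hu]; exact hw
        have h2 := hup _ _ h1
          (sublistForall₂_append_left
            (List.SublistForall₂.cons haa (sublistForall₂_refl w)) u)
        rw [deltaStar_append, hu] at h2
        exact h2
      · intro q a w hw
        obtain ⟨u, hu⟩ := hreach q
        have h1 : deltaStar δ (u ++ w) q0 ∈ F := by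
          rw [deltaStar_append, hu]; exact hw
        have h2 := hup _ _ h1
          (sublistForall₂_append_left
            (List.SublistForall₂.cons_right (a := a) (sublistForall₂_refl w)) u)
        rw [deltaStar_append, hu] at h2
        exact h2
    · rintro ⟨h1, h2⟩ w w' hw hsub
      exact main_lemma δ F h1 h2 hsub q0 [] hw
  · rintro ⟨h1, h2⟩
    constructor
    · intro a a' q q' haa hqq
      refine canQO_trans δ F (h1 q a a' haa) ?_
      intro w hw
      exact hqq (a' :: w) hw
    · intro q q' hq hqq
      exact hqq [] hq
end

section
/- Let A = (Q,q0,δ,F) be a reachable DFA over a preordered alphabet Σ whose recognized language L(A) is upwards-closed for the subword ordering. Then for every state q ∈ Q and every word v ∈ L(A), δ*(v,q) ∈ F. In particular, if L(A) is nonempty, an accepting state is reachable from every state. -/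
/-- In a reachable DFA recognizing an upwards-closed language, for every state
`q` and every accepted word `v`, `δ*(v,q) ∈ F`; in particular if the language
is nonempty an accepting state is reachable from every state. -/
theorem accepting_reachable_from_every_state {σ Q : Type*} [Preorder σ]
    (q0 : Q) (δ : σ → Q → Q) (F : Set Q)
    (hreach : ∀ q : Q, ∃ u : List σ, deltaStar δ u q0 = q)
    (hup : ∀ w w' : List σ, deltaStar δ w q0 ∈ F →
      List.SublistForall₂ (· ≤ ·) w w' → deltaStar δ w' q0 ∈ F) :
    (∀ (q : Q) (v : List σ), deltaStar δ v q0 ∈ F → deltaStar δ v q ∈ F) ∧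
    ((∃ v : List σ, deltaStar δ v q0 ∈ F) →
      ∀ q : Q, ∃ v : List σ, deltaStar δ v q ∈ F) := by
  have main : ∀ (q : Q) (v : List σ), deltaStar δ v q0 ∈ F → deltaStar δ v q ∈ F := by
    intro q v hv
    obtain ⟨u, hu⟩ := hreach q
    have hsub : List.SublistForall₂ (· ≤ ·) v (u ++ v) := by
      rw [List.sublistForall₂_iff]
      exact ⟨v, List.forall₂_refl v, (List.sublist_append_right u v)⟩
    have := hup v (u ++ v) hv hsub
    rwa [deltaStar, List.foldl_append, ← deltaStar, ← deltaStar, hu] at this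
  exact ⟨main, fun ⟨v, hv⟩ q => ⟨v, main q v hv⟩⟩
end

section
/- Let A = (Q,q0,δ,F) be a reachable DFA over a preordered alphabet Σ whose recognized language is upwards-closed for the subword ordering. Then every accepting state q ∈ F satisfies δ*(w,q) ∈ F for every word w; consequently every accepting state is a maximum for the canonical quasi-order (q' ⊑ q for all q' ∈ Q), and if moreover any two distinct states of A are distinguishable (for q ≠ q' there is a word w with exactly one of δ*(w,q) ∈ F, δ*(w,q') ∈ F), then A has at most one accepting state. -/
/-- In a reachable DFA recognizing an upwards-closed language, every accepting
state sends every word to an accepting state, is a maximum for the canonical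
quasi-order, and if distinct states are distinguishable there is at most one
accepting state. -/
theorem accepting_state_maximum {σ Q : Type*} [Preorder σ]
    (q0 : Q) (δ : σ → Q → Q) (F : Set Q)
    (hreach : ∀ q : Q, ∃ u : List σ, deltaStar δ u q0 = q)
    (hup : ∀ w w' : List σ, deltaStar δ w q0 ∈ F →
      List.SublistForall₂ (· ≤ ·) w w' → deltaStar δ w' q0 ∈ F) :
    (∀ q ∈ F, ∀ w : List σ, deltaStar δ w q ∈ F) ∧
    (∀ q ∈ F, ∀ q' : Q, canQO δ F q' q) ∧
    ((∀ q q' : Q, q ≠ q' →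
        ∃ w : List σ, Xor' (deltaStar δ w q ∈ F) (deltaStar δ w q' ∈ F)) →
      ∀ q ∈ F, ∀ q' ∈ F, q = q') := by
  have happ : ∀ (u w : List σ) (q : Q), deltaStar δ (u ++ w) q = deltaStar δ w (deltaStar δ u q) := by
    intro u w q; simp [deltaStar, List.foldl_append]
  have key : ∀ q ∈ F, ∀ w : List σ, deltaStar δ w q ∈ F := by
    intro q hq w
    obtain ⟨u, hu⟩ := hreach q
    have h1 : deltaStar δ u q0 ∈ F := hu ▸ hq
    have hsub : List.SublistForall₂ (· ≤ ·) u (u ++ w) := by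
      rw [List.sublistForall₂_iff]
      exact ⟨u, List.forall₂_refl u, List.sublist_append_left u w⟩
    have := hup u (u ++ w) h1 hsub
    rwa [happ, hu] at this
  refine ⟨key, ?_, ?_⟩
  · intro q hq q' w _
    exact key q hq w
  · intro hdist q hq q' hq'
    by_contra hne
    obtain ⟨w, hw⟩ := hdist q q' hne
    rcases hw with ⟨_, h2⟩ | ⟨_, h1⟩
    · exact h2 (key q' hq' w)
    · exact h1 (key q hq w)
end

section
/- Let X be a preordered set that is a well quasi-order, let Y be a preordered set, and let e : X → Y be a monotone surjection. Then every ideal J of Y is of the form J = ↓e[I] for some ideal I of X. -/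
section Aux

variable {X : Type*} [Preorder X]

/-- In a WQO, strict inclusion of lower sets is well-founded. -/
lemma wqo_lowerSet_wf
    (hwqo : ∀ f : ℕ → X, ∃ i j : ℕ, i < j ∧ f i ≤ f j) :
    WellFounded (fun A B : {S : Set X // IsLowerSet S} => A.1 ⊂ B.1) := by
  haveI : IsStrictOrder {S : Set X // IsLowerSet S} (fun A B => A.1 ⊂ B.1) :=
    { irrefl := fun a => ssubset_irrefl _,
      trans := fun a b c hab hbc => hab.trans hbc }
  rw [RelEmbedding.wellFounded_iff_isEmpty]
  constructor
  rintro f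
  have hss : ∀ n : ℕ, (f (n + 1)).1 ⊂ (f n).1 := fun n =>
    f.map_rel_iff.2 (Nat.lt_succ_self n)
  have hmono : ∀ m n : ℕ, m ≤ n → (f n).1 ⊆ (f m).1 := by
    intro m n hmn
    induction n with
    | zero => simp_all
    | succ k ih =>
      rcases Nat.lt_or_ge m (k + 1) with h | h
      · exact (hss k).1.trans (ih (Nat.lt_succ_iff.1 h))
      · have : m = k + 1 := le_antisymm hmn h
        subst this; rfl
  choose x hx1 hx2 using fun n => Set.exists_of_ssubset (hss n)
  obtain ⟨i, j, hij, hle⟩ := hwqo x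
  exact hx2 i ((f (i + 1)).2 hle (hmono (i + 1) j hij (hx1 j)))

/-- In a WQO, every lower set is a finite union of ideals. -/
lemma wqo_lowerSet_decomp
    (hwqo : ∀ f : ℕ → X, ∃ i j : ℕ, i < j ∧ f i ≤ f j)
    (D : Set X) (hD : IsLowerSet D) :
    ∃ L : List (Set X), (∀ I ∈ L, Order.IsIdeal I) ∧ ∀ x, x ∈ D ↔ ∃ I ∈ L, x ∈ I := by
  suffices h : ∀ A : {S : Set X // IsLowerSet S},
      ∃ L : List (Set X), (∀ I ∈ L, Order.IsIdeal I) ∧ ∀ x, x ∈ A.1 ↔ ∃ I ∈ L, x ∈ I by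
    exact h ⟨D, hD⟩
  clear hD D
  intro A
  induction A using ((wqo_lowerSet_wf hwqo).induction) with
  | _ A ih =>
    obtain ⟨D, hD⟩ := A
    by_cases hne : D.Nonempty
    · by_cases hdir : DirectedOn (· ≤ ·) D
      · exact ⟨[D], by intro I hI; rw [List.mem_singleton] at hI; subst hI; exact ⟨hD, hne, hdir⟩, fun x => by simp⟩
      · simp only [DirectedOn, not_forall] at hdir
        obtain ⟨a, ha, b, hb, hub⟩ := hdir
        push_neg at hub
        set D₁ : Set X := {x ∈ D | ¬ a ≤ x} with hD₁def
        set D₂ : Set X := {x ∈ D | ¬ b ≤ x} with hD₂def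
        have hD₁ : IsLowerSet D₁ := fun u v huv hv =>
          ⟨hD huv hv.1, fun h => hv.2 (h.trans huv)⟩
        have hD₂ : IsLowerSet D₂ := fun u v huv hv =>
          ⟨hD huv hv.1, fun h => hv.2 (h.trans huv)⟩
        have hs₁ : D₁ ⊂ D := ⟨fun x hx => hx.1, fun h => (h ha).2 le_rfl⟩
        have hs₂ : D₂ ⊂ D := ⟨fun x hx => hx.1, fun h => (h hb).2 le_rfl⟩
        obtain ⟨L₁, hL₁, hU₁⟩ := ih ⟨D₁, hD₁⟩ hs₁
        obtain ⟨L₂, hL₂, hU₂⟩ := ih ⟨D₂, hD₂⟩ hs₂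
        refine ⟨L₁ ++ L₂, ?_, ?_⟩
        · intro I hI
          rcases List.mem_append.1 hI with h | h
          · exact hL₁ I h
          · exact hL₂ I h
        · intro x
          constructor
          · intro hx
            by_cases hax : a ≤ x
            · have hbx : ¬ b ≤ x := fun hbx => hub x hx hax hbx
              obtain ⟨I, hI, hxI⟩ := (hU₂ x).1 ⟨hx, hbx⟩
              exact ⟨I, List.mem_append.2 (Or.inr hI), hxI⟩
            · obtain ⟨I, hI, hxI⟩ := (hU₁ x).1 ⟨hx, hax⟩
              exact ⟨I, List.mem_append.2 (Or.inl hI), hxI⟩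
          · rintro ⟨I, hI, hxI⟩
            rcases List.mem_append.1 hI with h | h
            · exact ((hU₁ x).2 ⟨I, h, hxI⟩).1
            · exact ((hU₂ x).2 ⟨I, h, hxI⟩).1
    · refine ⟨[], by simp, fun x => ?_⟩
      simp [Set.not_nonempty_iff_eq_empty.1 hne]

/-- A directed nonempty set covered by finitely many lower sets is contained in one. -/
lemma directed_subset_of_cover {Y : Type*} [Preorder Y] (J : Set Y)
    (hne : J.Nonempty) (hdir : DirectedOn (· ≤ ·) J) :
    ∀ L : List (Set Y), (∀ S ∈ L, IsLowerSet S) → (∀ y ∈ J, ∃ S ∈ L, y ∈ S) →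
      ∃ S ∈ L, J ⊆ S := by
  intro L
  induction L with
  | nil =>
    intro _ hcov
    obtain ⟨y, hy⟩ := hne
    obtain ⟨S, hS, _⟩ := hcov y hy
    exact absurd hS List.not_mem_nil
  | cons S L ih =>
    intro hlow hcov
    by_cases hJS : J ⊆ S
    · exact ⟨S, List.mem_cons_self, hJS⟩
    · obtain ⟨a, haJ, haS⟩ := Set.not_subset.1 hJS
      have hcov' : ∀ y ∈ J, ∃ T ∈ L, y ∈ T := by
        intro y hy
        obtain ⟨c, hcJ, hac, hyc⟩ := hdir a haJ y hy
        obtain ⟨T, hT, hcT⟩ := hcov c hcJ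
        rcases List.mem_cons.1 hT with rfl | hT'
        · exact absurd (hlow T hT hac hcT) haS
        · exact ⟨T, hT', hlow T (List.mem_cons_of_mem S hT') hyc hcT⟩
      obtain ⟨T, hT, hJT⟩ := ih (fun T hT => hlow T (List.mem_cons_of_mem S hT)) hcov'
      exact ⟨T, List.mem_cons_of_mem S hT, hJT⟩

end Aux

/-- If `X` is a WQO and `e : X → Y` is a monotone surjection, every ideal of
`Y` is the downward closure of the image of an ideal of `X`. -/
theorem ideal_eq_lowerClosure_image {X Y : Type*} [Preorder X] [Preorder Y]
    (hwqo : ∀ f : ℕ → X, ∃ i j : ℕ, i < j ∧ f i ≤ f j)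
    (e : X → Y) (hmono : Monotone e) (hsurj : Function.Surjective e)
    (J : Set Y) (hJ : Order.IsIdeal J) :
    ∃ I : Set X, Order.IsIdeal I ∧ J = ↑(lowerClosure (e '' I)) := by
  set D : Set X := e ⁻¹' J with hDdef
  have hDlow : IsLowerSet D := fun u v huv hv => hJ.1 (hmono huv) hv
  obtain ⟨L, hLid, hLU⟩ := wqo_lowerSet_decomp hwqo D hDlow
  -- J is covered by the lower closures of the images of the ideals in L
  have hcov : ∀ y ∈ J, ∃ S ∈ L.map (fun I => (↑(lowerClosure (e '' I)) : Set Y)), y ∈ S := by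
    intro y hy
    obtain ⟨x, rfl⟩ := hsurj y
    obtain ⟨I, hI, hxI⟩ := (hLU x).1 hy
    exact ⟨_, List.mem_map_of_mem hI, subset_lowerClosure (Set.mem_image_of_mem e hxI)⟩
  have hlow : ∀ S ∈ L.map (fun I => (↑(lowerClosure (e '' I)) : Set Y)), IsLowerSet S := by
    intro S hS
    obtain ⟨I, _, rfl⟩ := List.mem_map.1 hS
    exact (lowerClosure (e '' I)).lower
  obtain ⟨S, hS, hJS⟩ := directed_subset_of_cover J hJ.2 hJ.3 _ hlow hcov
  obtain ⟨I, hIL, rfl⟩ := List.mem_map.1 hS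
  refine ⟨I, hLid I hIL, le_antisymm hJS ?_⟩
  rintro y ⟨z, ⟨x, hxI, rfl⟩, hyz⟩
  exact hJ.1 hyz ((hLU x).2 ⟨I, hIL, hxI⟩)
end

section
/- Let k ≥ 1, let the alphabet be Fin k with the equality order, and let |·| : (Fin k)* → ℕ^k be the Parikh map counting occurrences of each letter. Let P ⊆ (Fin k)* be the *-product language P = (Σ'₀)* σ₁? (Σ'₁)* σ₂? ⋯ σₙ? (Σ'ₙ)*, where each Σ'ⱼ ⊆ Fin k is nonempty, (Σ')* denotes the set of words all of whose letters lie in Σ', and σ? = {ε, σ}; concretely P is the set of all concatenations u₀v₁u₁⋯vₙuₙ with each uⱼ ∈ (Σ'ⱼ)* and each vⱼ ∈ {ε, σⱼ}. Then the downward closure of the image |P| in ℕ^k (for the componentwise order) equals the set of x ∈ ℕ^k such that for every letter i ∈ Fin k, either i belongs to some Σ'ⱼ, or xᵢ is at most the number of occurrences of i in the word σ₁⋯σₙ. -/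
/-- The Parikh map: a word over `Fin k` is sent to the tuple counting the
occurrences of each letter. -/
def parikh {k : ℕ} (w : List (Fin k)) : Fin k → ℕ := fun i => w.count i

/-- The `*`-product language `(Σ'₀)* σ₁? (Σ'₁)* σ₂? ⋯ σₙ? (Σ'ₙ)*`:
all concatenations `u₀v₁u₁⋯vₙuₙ` with `uⱼ ∈ (Σ'ⱼ)*` and `vⱼ ∈ {ε, σⱼ}`. -/
def starProduct {k n : ℕ} (S : Fin (n + 1) → Set (Fin k)) (s : Fin n → Fin k) :
    Set (List (Fin k)) :=
  {w | ∃ (u : Fin (n + 1) → List (Fin k)) (v : Fin n → List (Fin k)),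
    (∀ j, ∀ a ∈ u j, a ∈ S j) ∧
    (∀ i, v i = [] ∨ v i = [s i]) ∧
    w = u 0 ++ (List.ofFn fun i : Fin n => v i ++ u i.succ).flatten}

private lemma count_ofFn' {α : Type*} [DecidableEq α] {n : ℕ} (s : Fin n → α) (a : α) :
    (List.ofFn s).count a = ∑ i, ([s i].count a) := by
  induction n with
  | zero => simp
  | succ m ih =>
    simp only [List.ofFn_succ, List.count_cons, Fin.sum_univ_succ, ih,
      List.count_singleton', List.count_nil]
    ring

private lemma count_word {k n : ℕ} (u : Fin (n + 1) → List (Fin k))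
    (v : Fin n → List (Fin k)) (a : Fin k) :
    (u 0 ++ (List.ofFn fun i : Fin n => v i ++ u i.succ).flatten).count a
      = (u 0).count a + ∑ i : Fin n, ((v i).count a + (u i.succ).count a) := by
  simp [List.count_append, List.count_flatten, List.sum_ofFn]

/-- The downward closure in `ℕ^k` of the Parikh image of a `*`-product
`(Σ'₀)* σ₁? ⋯ σₙ? (Σ'ₙ)*` (with each `Σ'ⱼ` nonempty) is the set of tuples `x`
such that for every letter `i`, either `i` appears in some `Σ'ⱼ` or `xᵢ` is at
most the number of occurrences of `i` in `σ₁⋯σₙ`. -/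
theorem lowerClosure_parikh_starProduct (k : ℕ) (hk : 1 ≤ k) (n : ℕ)
    (S : Fin (n + 1) → Set (Fin k)) (hS : ∀ j, (S j).Nonempty)
    (s : Fin n → Fin k) :
    (↑(lowerClosure (parikh '' starProduct S s)) : Set (Fin k → ℕ)) =
      {x : Fin k → ℕ | ∀ i : Fin k,
        (∃ j, i ∈ S j) ∨ x i ≤ (List.ofFn s).count i} := by
  classical
  ext x
  simp only [SetLike.mem_coe, mem_lowerClosure, Set.mem_image, Set.mem_setOf_eq]
  constructor
  · rintro ⟨-, ⟨w, ⟨u, v, hu, hv, rfl⟩, rfl⟩, hx⟩ i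
    by_cases hi : ∃ j, i ∈ S j
    · exact Or.inl hi
    · right
      have hx' : x i ≤ _ := hx i
      rw [parikh, count_word] at hx'
      have hu0 : ∀ j, (u j).count i = 0 := fun j =>
        List.count_eq_zero.mpr fun h => hi ⟨j, hu j i h⟩
      have hvle : ∀ j, (v j).count i ≤ [s j].count i := by
        intro j
        rcases hv j with h | h <;> simp [h]
      calc x i ≤ (u 0).count i + ∑ j : Fin n, ((v j).count i + (u j.succ).count i) := hx'
        _ ≤ 0 + ∑ j : Fin n, ([s j].count i + 0) := by
            gcongr with j _ j _
            · exact (hu0 0).le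
            · exact hvle j
            · exact (hu0 j.succ).le
        _ = (List.ofFn s).count i := by rw [count_ofFn']; simp
  · intro hx
    set u : Fin (n + 1) → List (Fin k) := fun j =>
      (List.ofFn fun i : Fin k => if i ∈ S j then List.replicate (x i) i else []).flatten
      with hudef
    have huS : ∀ j, ∀ a ∈ u j, a ∈ S j := by
      intro j a ha
      simp only [hudef, List.mem_flatten, List.mem_ofFn] at ha
      obtain ⟨l, ⟨i, rfl⟩, hal⟩ := ha
      by_cases h : i ∈ S j
      · simp only [if_pos h, List.mem_replicate] at hal
        exact hal.2 ▸ h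
      · simp [if_neg h] at hal
    set v : Fin n → List (Fin k) := fun i => [s i] with hvdef
    set w := u 0 ++ (List.ofFn fun i : Fin n => v i ++ u i.succ).flatten with hwdef
    refine ⟨parikh w, ⟨w, ⟨u, v, huS, fun i => Or.inr rfl, hwdef⟩, rfl⟩, ?_⟩
    intro i
    show x i ≤ w.count i
    rw [hwdef, count_word]
    have hucount : ∀ j, i ∈ S j → x i ≤ (u j).count i := by
      intro j hij
      have : (u j).count i
          = ∑ i' : Fin k, ((if i' ∈ S j then List.replicate (x i') i' else []).count i) := by
        simp [hudef, List.count_flatten, List.sum_ofFn]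
      rw [this]
      calc x i = (if i ∈ S j then List.replicate (x i) i else []).count i := by
            simp [if_pos hij]
        _ ≤ _ := Finset.single_le_sum (f := fun i' =>
            ((if i' ∈ S j then List.replicate (x i') i' else []).count i))
            (fun _ _ => Nat.zero_le _) (Finset.mem_univ i)
    rcases hx i with ⟨j, hij⟩ | hle
    · rcases Fin.eq_zero_or_eq_succ j with rfl | ⟨j', rfl⟩
      · calc x i ≤ (u 0).count i := hucount 0 hij
          _ ≤ _ := Nat.le_add_right _ _
      · calc x i ≤ (u j'.succ).count i := hucount j'.succ hij
          _ ≤ (v j').count i + (u j'.succ).count i := Nat.le_add_left _ _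
          _ ≤ ∑ j : Fin n, ((v j).count i + (u j.succ).count i) :=
              Finset.single_le_sum (f := fun j => (v j).count i + (u j.succ).count i)
                (fun _ _ => Nat.zero_le _) (Finset.mem_univ j')
          _ ≤ _ := Nat.le_add_left _ _
    · calc x i ≤ (List.ofFn s).count i := hle
        _ = ∑ j : Fin n, (v j).count i := by rw [count_ofFn']
        _ ≤ ∑ j : Fin n, ((v j).count i + (u j.succ).count i) := by
            gcongr with j _; exact Nat.le_add_right _ _
        _ ≤ _ := Nat.le_add_left _ _
end
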